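/- With R^fl as in the context, let S := O[y₁₁, y₂₂, …, y_{2m,2m}] be the polynomial ring in the diagonal variables and consider the natural O-algebra homomorphism S → R^fl sending each y_{ii} to its class. Then this homomorphism is injective, R^fl is a finitely generated S-module, and R^fl is flat as an S-module. -/

import Mathlib

open MvPolynomial

namespace Stmt12

/-! ## The ring `R^fl`

`O` is a complete discrete valuation ring whose fraction field has characteristic `0` and whose
residue field has characteristic `2`; `c ∈ O` is a unit and `b ∈ O` a uniformizer.
`P := O[y_{ij} (1 ≤ i,j ≤ 2m), x₁,…,x_{2m}]`, `α := Σ_{i=1}^m y_{i,2m+1−i}`, and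
`I^fl ⊆ P` is the ideal generated by: all `2 × 2` minors of the `(2m+1) × 2m` matrix obtained by
stacking `Y` on top of the row `x`; all entries of `Y − Yᵀ`; and all entries of the matrix
`(c·α + b)·Y + xᵗ·x`.  Finally `R^fl := P ⧸ I^fl`. -/

variable (O : Type*) [CommRing O] (m : ℕ) (c b : O)

/-- The polynomial ring `P = O[y_{ij} (1 ≤ i,j ≤ 2m), x₁, …, x_{2m}]`. -/
abbrev P := MvPolynomial ((Fin (2 * m) × Fin (2 * m)) ⊕ Fin (2 * m)) O

/-- The matrix of variables `Y = (y_{ij})`. -/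
noncomputable def Y : Matrix (Fin (2 * m)) (Fin (2 * m)) (P O m) :=
  Matrix.of fun i j => X (Sum.inl (i, j))

/-- The row of variables `x = (x₁, …, x_{2m})`. -/
noncomputable def x : Fin (2 * m) → P O m := fun i => X (Sum.inr i)

/-- The `(2m+1) × 2m` matrix obtained by stacking `Y` on top of the row `x`. -/
noncomputable def stacked : Matrix (Fin (2 * m + 1)) (Fin (2 * m)) (P O m) :=
  Matrix.of fun i j =>
    if h : (i : ℕ) < 2 * m then Y O m ⟨(i : ℕ), h⟩ j else x O m j

/-- `α = Σ_{i=1}^m y_{i, 2m+1−i}` (in zero-based indexing: `Σ_{i=0}^{m−1} y_{i, 2m−1−i}`). -/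
noncomputable def alpha : P O m :=
  ∑ i : Fin m, Y O m (Fin.castLE (by omega) i) (Fin.rev (Fin.castLE (by omega) i))

/-- The ideal `I^fl`, generated by: all `2 × 2` minors of the stacked matrix; all entries of
`Y − Yᵀ`; and all entries of the matrix `(c·α + b)·Y + xᵗ·x`. -/
noncomputable def Ifl : Ideal (P O m) :=
  Ideal.span
    ({r | ∃ (a a' : Fin (2 * m + 1)) (p q : Fin (2 * m)),
        r = stacked O m a p * stacked O m a' q - stacked O m a q * stacked O m a' p} ∪
      {r | ∃ i j : Fin (2 * m), r = Y O m i j - Y O m j i} ∪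
      {r | ∃ i j : Fin (2 * m),
        r = (C c * alpha O m + C b) * Y O m i j + x O m i * x O m j})

/-- The ring `R^fl = P ⧸ I^fl`. -/
abbrev Rfl := P O m ⧸ Ifl O m c b

/-- The class in `R^fl` of the variable `y_{ij}`. -/
noncomputable def yc (i j : Fin (2 * m)) : Rfl O m c b :=
  Ideal.Quotient.mk (Ifl O m c b) (X (Sum.inl (i, j)))

/-- The class in `R^fl` of the variable `x_i`. -/
noncomputable def xc (i : Fin (2 * m)) : Rfl O m c b :=
  Ideal.Quotient.mk (Ifl O m c b) (X (Sum.inr i))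

end Stmt12

namespace Stmt12Proof
open Stmt12

variable (O : Type*) [CommRing O] (m : ℕ) (c b : O)

/-- `q = Σ v_i v_{2m-1-i}`, the image of `alpha`. -/
noncomputable def qp : MvPolynomial (Fin (2 * m) × Fin 1) O :=
  ∑ i : Fin m, X (Fin.castLE (by omega) i, 0) * X (Fin.rev (Fin.castLE (by omega) i), 0)

/-- `f = T² + (c q + b)`. -/
noncomputable def fp : Polynomial (MvPolynomial (Fin (2 * m) × Fin 1) O) :=
  Polynomial.X ^ 2 + Polynomial.C (C c * qp O m + C b)

lemma fp_monic : (fp O m c b).Monic :=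
  Polynomial.monic_X_pow_add_C _ two_ne_zero

/-- The ring `R' = O[v][T]/(T² + cq + b)`. -/
abbrev Rp := AdjoinRoot (fp O m c b)

noncomputable def tt : Rp O m c b := AdjoinRoot.root _

noncomputable def vv (i : Fin (2 * m)) : Rp O m c b := AdjoinRoot.of _ (X (i, 0))

lemma tt_sq : tt O m c b ^ 2 = - AdjoinRoot.of _ (C c * qp O m + C b) := by
  refine eq_neg_of_add_eq_zero_left ?_
  have e1 : tt O m c b ^ 2 = AdjoinRoot.mk (fp O m c b) (Polynomial.X ^ 2) := by
    rw [tt, ← AdjoinRoot.mk_X, ← map_pow]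
  have e2 : AdjoinRoot.of (fp O m c b) (C c * qp O m + C b)
      = AdjoinRoot.mk (fp O m c b) (Polynomial.C (C c * qp O m + C b)) := rfl
  rw [e1, e2, ← map_add]
  exact AdjoinRoot.mk_self

/-- The map `P → R'`, `y_{ij} ↦ v_i v_j`, `x_i ↦ t v_i`. -/
noncomputable def Phi : P O m →ₐ[O] Rp O m c b :=
  aeval (Sum.elim (fun p : Fin (2 * m) × Fin (2 * m) => vv O m c b p.1 * vv O m c b p.2)
    (fun i => tt O m c b * vv O m c b i))

@[simp] lemma Phi_Y (i j : Fin (2 * m)) :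
    Phi O m c b (Y O m i j) = vv O m c b i * vv O m c b j := by
  simp [Phi, Y]

@[simp] lemma Phi_x (i : Fin (2 * m)) :
    Phi O m c b (x O m i) = tt O m c b * vv O m c b i := by
  simp [Phi, x]

/-- The "row factor" of row `a` of the stacked matrix. -/
noncomputable def rr (a : Fin (2 * m + 1)) : Rp O m c b :=
  if h : (a : ℕ) < 2 * m then vv O m c b ⟨a, h⟩ else tt O m c b

lemma Phi_stacked (a : Fin (2 * m + 1)) (p : Fin (2 * m)) :
    Phi O m c b (stacked O m a p) = rr O m c b a * vv O m c b p := by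
  rw [stacked, rr]
  by_cases h : (a : ℕ) < 2 * m
  · simp only [Matrix.of_apply, dif_pos h, Phi_Y]
  · simp only [Matrix.of_apply, dif_neg h, Phi_x]

lemma Phi_alpha : Phi O m c b (alpha O m) = AdjoinRoot.of _ (qp O m) := by
  rw [alpha, qp, map_sum, map_sum]
  refine Finset.sum_congr rfl fun i _ => ?_
  rw [Phi_Y, map_mul]
  rfl

lemma Phi_ker : Ifl O m c b ≤ RingHom.ker (Phi O m c b).toRingHom := by
  rw [Ifl, Ideal.span_le]
  rintro r ((⟨a, a', p, q, rfl⟩ | ⟨i, j, rfl⟩) | ⟨i, j, rfl⟩) <;>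
      simp only [SetLike.mem_coe, RingHom.mem_ker, AlgHom.toRingHom_eq_coe, RingHom.coe_coe]
  · simp only [map_sub, map_mul, Phi_stacked]; ring
  · simp only [map_sub, Phi_Y]; ring
  · have hsq := tt_sq O m c b
    simp only [map_add, map_mul, Phi_Y, Phi_x, Phi_alpha]
    have hC : Phi O m c b (MvPolynomial.C c) = AdjoinRoot.of _ (MvPolynomial.C c) := by
      rw [show (MvPolynomial.C c : P O m) = algebraMap O (P O m) c from rfl, AlgHom.commutes]
      rfl
    have hB : Phi O m c b (MvPolynomial.C b) = AdjoinRoot.of _ (MvPolynomial.C b) := by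
      rw [show (MvPolynomial.C b : P O m) = algebraMap O (P O m) b from rfl, AlgHom.commutes]
      rfl
    rw [hC, hB]
    have : (tt O m c b * vv O m c b i) * (tt O m c b * vv O m c b j)
        = tt O m c b ^ 2 * (vv O m c b i * vv O m c b j) := by ring
    rw [this, hsq, map_add, map_mul]
    ring

/-- The induced map `R^fl → R'`. -/
noncomputable def Phib : Rfl O m c b →ₐ[O] Rp O m c b :=
  Ideal.Quotient.liftₐ (Ifl O m c b) (Phi O m c b) (fun a ha => Phi_ker O m c b ha)

@[simp] lemma Phib_mk (p : P O m) :
    Phib O m c b (Ideal.Quotient.mk (Ifl O m c b) p) = Phi O m c b p := rfl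

@[simp] lemma Phib_yc (i j : Fin (2 * m)) :
    Phib O m c b (yc O m c b i j) = vv O m c b i * vv O m c b j := by
  rw [yc, Phib_mk]; exact Phi_Y O m c b i j

@[simp] lemma Phib_xc (i : Fin (2 * m)) :
    Phib O m c b (xc O m c b i) = tt O m c b * vv O m c b i := by
  rw [xc, Phib_mk]; exact Phi_x O m c b i

end Stmt12Proof
namespace Stmt12Proof
open Stmt12

section Part2
variable (O : Type*) [CommRing O] (m : ℕ) (c b : O)

lemma Y_def (i j : Fin (2 * m)) : Y O m i j = X (Sum.inl (i, j)) := rfl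
lemma x_def (i : Fin (2 * m)) : x O m i = X (Sum.inr i) := rfl

lemma stacked_cast (a : Fin (2 * m)) (p : Fin (2 * m)) :
    stacked O m (Fin.castSucc a) p = Y O m a p := by
  have h : ((Fin.castSucc a : Fin (2 * m + 1)) : ℕ) < 2 * m := by simpa using a.isLt
  rw [stacked, Matrix.of_apply, dif_pos h]
  have e : (⟨((Fin.castSucc a : Fin (2 * m + 1)) : ℕ), h⟩ : Fin (2 * m)) = a :=
    Fin.ext (by simp)
  rw [e]

lemma stacked_last (p : Fin (2 * m)) :
    stacked O m (Fin.last (2 * m)) p = x O m p := by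
  rw [stacked, Matrix.of_apply, dif_neg (by simp)]

/-- Symmetry relation `y_{ab} = y_{ba}`. -/
lemma yc_symm (a a' : Fin (2 * m)) : yc O m c b a a' = yc O m c b a' a := by
  rw [yc, yc, Ideal.Quotient.eq]
  exact Ideal.subset_span (Or.inl (Or.inr ⟨a, a', rfl⟩))

/-- Minor relation among `Y`-rows: swap second entries. -/
lemma yc_R2 (a p a' q : Fin (2 * m)) :
    yc O m c b a p * yc O m c b a' q = yc O m c b a q * yc O m c b a' p := by
  rw [yc, yc, yc, yc, ← map_mul, ← map_mul, Ideal.Quotient.eq]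
  refine Ideal.subset_span (Or.inl (Or.inl ⟨Fin.castSucc a, Fin.castSucc a', p, q, ?_⟩))
  rw [stacked_cast, stacked_cast, stacked_cast, stacked_cast, Y_def, Y_def, Y_def, Y_def]

/-- Minor relation with the `x`-row. -/
lemma yc_R3 (a p q : Fin (2 * m)) :
    yc O m c b a p * xc O m c b q = yc O m c b a q * xc O m c b p := by
  rw [yc, yc, xc, xc, ← map_mul, ← map_mul, Ideal.Quotient.eq]
  refine Ideal.subset_span (Or.inl (Or.inl ⟨Fin.castSucc a, Fin.last (2 * m), p, q, ?_⟩))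
  rw [stacked_cast, stacked_cast, stacked_last, stacked_last, Y_def, Y_def, x_def, x_def]

/-- The class of `alpha`. -/
noncomputable def alc : Rfl O m c b := Ideal.Quotient.mk (Ifl O m c b) (alpha O m)

lemma alc_eq : alc O m c b =
    ∑ i : Fin m, yc O m c b (Fin.castLE (by omega) i) (Fin.rev (Fin.castLE (by omega) i)) := by
  rw [alc, alpha, map_sum]
  rfl

/-- The quadratic relation `x_i x_j = -(c α + b) y_{ij}`. -/
lemma xc_R4 (i j : Fin (2 * m)) :
    xc O m c b i * xc O m c b j =
      -((algebraMap O (Rfl O m c b) c * alc O m c b + algebraMap O (Rfl O m c b) b)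
        * yc O m c b i j) := by
  have h : Ideal.Quotient.mk (Ifl O m c b)
      ((C c * alpha O m + C b) * Y O m i j + x O m i * x O m j) = 0 := by
    rw [Ideal.Quotient.eq_zero_iff_mem]
    exact Ideal.subset_span (Or.inr ⟨i, j, rfl⟩)
  have h2 : algebraMap O (Rfl O m c b) c = Ideal.Quotient.mk (Ifl O m c b) (C c) := rfl
  have h3 : algebraMap O (Rfl O m c b) b = Ideal.Quotient.mk (Ifl O m c b) (C b) := rfl
  rw [Y_def O m i j, x_def O m i, x_def O m j] at h
  rw [h2, h3, alc, yc, xc, xc]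
  simp only [map_add, map_mul] at h ⊢
  linear_combination h

end Part2

section Part3
variable {O : Type*} [CommRing O] {m : ℕ} {c b : O}
variable (O m c b) in
/-- The word map: pairs up consecutive entries into `y`'s, a leftover single entry becomes `x`. -/
noncomputable def w : List (Fin (2 * m)) → Rfl O m c b
  | [] => 1
  | [a] => xc O m c b a
  | a :: a' :: l => yc O m c b a a' * w (a :: a' :: l).tail.tail

@[simp] lemma w_nil : w O m c b [] = 1 := rfl
@[simp] lemma w_single (a : Fin (2 * m)) : w O m c b [a] = xc O m c b a := rfl
@[simp] lemma w_cons2 (a a' : Fin (2 * m)) (l : List (Fin (2 * m))) :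
    w O m c b (a :: a' :: l) = yc O m c b a a' * w O m c b l := rfl

lemma w_append : ∀ (l₁ l₂ : List (Fin (2 * m))), Even l₁.length →
    w O m c b (l₁ ++ l₂) = w O m c b l₁ * w O m c b l₂
  | [], l₂, _ => by simp
  | [a], l₂, h => by simp at h
  | a :: a' :: l₁, l₂, h => by
    have h' : Even l₁.length := by
      rcases h with ⟨k, hk⟩
      simp only [List.length_cons] at hk
      exact ⟨k - 1, by omega⟩
    simp [w_append l₁ l₂ h', mul_assoc]

lemma w_swap01 (a a' : Fin (2 * m)) (l : List (Fin (2 * m))) :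
    w O m c b (a :: a' :: l) = w O m c b (a' :: a :: l) := by
  simp [yc_symm O m c b a a']

lemma w_swap12 (a p q : Fin (2 * m)) (l : List (Fin (2 * m))) :
    w O m c b (a :: p :: q :: l) = w O m c b (a :: q :: p :: l) := by
  match l with
  | [] => simp [yc_R3 O m c b a p q]
  | d :: l' =>
    simp only [w_cons2]
    have hpair : yc O m c b a p * yc O m c b q d = yc O m c b a q * yc O m c b p d := by
      rw [yc_symm O m c b q d, yc_R2 O m c b a p d q, yc_symm O m c b d p]
    rw [← mul_assoc, ← mul_assoc, hpair]

lemma w_adjswap : ∀ (p : List (Fin (2 * m))) (i j : Fin (2 * m)) (s : List (Fin (2 * m))),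
    w O m c b (p ++ i :: j :: s) = w O m c b (p ++ j :: i :: s)
  | [], i, j, s => w_swap01 i j s
  | [z], i, j, s => w_swap12 z i j s
  | z₁ :: z₂ :: p, i, j, s => by
    simp only [List.cons_append, w_cons2]
    rw [w_adjswap p i j s]

lemma w_bubble' (p : List (Fin (2 * m))) : ∀ (u : List (Fin (2 * m))) (a : Fin (2 * m))
    (v : List (Fin (2 * m))),
    w O m c b (p ++ (u ++ a :: v)) = w O m c b (p ++ a :: (u ++ v)) := by
  intro u
  induction u using List.reverseRecOn with
  | nil => intro a v; rfl
  | append_singleton u z ih =>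
    intro a v
    have h1 : p ++ ((u ++ [z]) ++ a :: v) = (p ++ u) ++ z :: a :: v := by simp
    rw [h1, w_adjswap (p ++ u) z a v]
    have h2 : (p ++ u) ++ a :: z :: v = p ++ (u ++ a :: z :: v) := by simp
    rw [h2, ih a (z :: v)]
    congr 2
    simp

lemma w_perm : ∀ (l₁ l₂ : List (Fin (2 * m))), l₁.Perm l₂ → w O m c b l₁ = w O m c b l₂
  | [], l₂, h => by rw [← h.nil_eq]
  | [a], l₂, h => by
    rw [List.perm_comm] at h
    rw [List.perm_singleton.mp h]
  | a :: a' :: t₁, l₂, h => by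
    have ha : a ∈ l₂ := h.mem_iff.mp (by simp)
    obtain ⟨u, v, rfl⟩ := List.append_of_mem ha
    have h2 : (a' :: t₁).Perm (u ++ v) := by
      have := h.trans (List.perm_middle (a := a) (l₁ := u) (l₂ := v))
      exact this.cons_inv
    have ha' : a' ∈ u ++ v := h2.mem_iff.mp (by simp)
    obtain ⟨u', v', huv⟩ := List.append_of_mem ha'
    have h3 : t₁.Perm (u' ++ v') := by
      rw [huv] at h2
      exact (h2.trans (List.perm_middle (a := a') (l₁ := u') (l₂ := v'))).cons_inv
    have e1 : w O m c b (u ++ a :: v) = w O m c b (a :: (u ++ v)) := by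
      have := w_bubble' (O := O) (m := m) (c := c) (b := b) [] u a v
      simpa using this
    have e2 : w O m c b (a :: (u' ++ a' :: v')) = w O m c b (a :: a' :: (u' ++ v')) := by
      have := w_bubble' (O := O) (m := m) (c := c) (b := b) [a] u' a' v'
      simpa using this
    rw [e1, huv, e2, w_cons2, w_cons2, w_perm t₁ (u' ++ v') h3]

end Part3
end Stmt12Proof
namespace Stmt12Proof
open Stmt12

section Part4
variable (O : Type*) [CommRing O] (m : ℕ) (c b : O)

/-- The structure map `S → R^fl`. -/
noncomputable def Psi : MvPolynomial (Fin (2 * m)) O →ₐ[O] Rfl O m c b :=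
  aeval (fun i => yc O m c b i i)

/-- `R^fl` as an `S`-algebra via `Psi`. -/
noncomputable abbrev algS : Algebra (MvPolynomial (Fin (2 * m)) O) (Rfl O m c b) :=
  (Psi O m c b).toRingHom.toAlgebra

attribute [local instance] algS

set_option synthInstance.maxHeartbeats 200000

lemma algS_smul (s : MvPolynomial (Fin (2 * m)) O) (z : Rfl O m c b) :
    s • z = Psi O m c b s * z := by
  rw [Algebra.smul_def, RingHom.algebraMap_toAlgebra]
  rfl

lemma Psi_C (a : O) : Psi O m c b (C a) = algebraMap O (Rfl O m c b) a := by
  rw [show (C a : MvPolynomial (Fin (2 * m)) O) = algebraMap O _ a from rfl, AlgHom.commutes]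

lemma yc_diag (a : Fin (2 * m)) : yc O m c b a a = Psi O m c b (X a) := by
  rw [Psi, aeval_X]

abbrev towerOSR : IsScalarTower O (MvPolynomial (Fin (2 * m)) O) (Rfl O m c b) :=
  IsScalarTower.of_algebraMap_eq' ((Psi O m c b).comp_algebraMap).symm

attribute [local instance] towerOSR

/-- The canonical spanning family indexed by subsets. -/
noncomputable def Bfam (E : Finset (Fin (2 * m))) : Rfl O m c b :=
  w O m c b (Finset.sort E (· ≤ ·))

noncomputable def prodX (xs : List (Fin (2 * m))) : Rfl O m c b :=
  (xs.map (xc O m c b)).prod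

@[simp] lemma prodX_nil : prodX O m c b [] = 1 := rfl
@[simp] lemma prodX_cons (a : Fin (2 * m)) (xs : List (Fin (2 * m))) :
    prodX O m c b (a :: xs) = xc O m c b a * prodX O m c b xs := by
  simp [prodX]

lemma prodX_append (xs ys : List (Fin (2 * m))) :
    prodX O m c b (xs ++ ys) = prodX O m c b xs * prodX O m c b ys := by
  simp [prodX]

/-- The span of the canonical family. -/
noncomputable abbrev Msub : Submodule (MvPolynomial (Fin (2 * m)) O) (Rfl O m c b) :=
  Submodule.span (MvPolynomial (Fin (2 * m)) O) (Set.range (Bfam O m c b))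

lemma Bfam_empty : Bfam O m c b ∅ = 1 := by
  rw [Bfam, Finset.sort_empty, w_nil]

lemma master : ∀ (N : ℕ) (l xs : List (Fin (2 * m))), l.length + 4 * xs.length ≤ N →
    w O m c b l * prodX O m c b xs ∈ Msub O m c b := by
  intro N
  induction N with
  | zero =>
    intro l xs h
    match l, xs with
    | [], [] =>
      rw [w_nil, prodX_nil, mul_one, ← Bfam_empty]
      exact Submodule.subset_span ⟨∅, rfl⟩
    | a :: l, xs => simp at h
    | l, a :: xs => simp at h
  | succ N ih =>
    intro l xs h
    match xs with
    | a :: rest =>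
      by_cases hev : Even l.length
      · have e1 : w O m c b l * prodX O m c b (a :: rest)
            = w O m c b (l ++ [a]) * prodX O m c b rest := by
          rw [w_append l [a] hev, prodX_cons, w_single]; ring
        rw [e1]
        exact ih _ _ (by simp only [List.length_append, List.length_cons,
          List.length_nil] at h ⊢; omega)
      · obtain ⟨l'', p, rfl⟩ : ∃ l'' p, l = l'' ++ [p] := by
          rcases List.eq_nil_or_concat l with rfl | ⟨l'', p, rfl⟩
          · simp at hev
          · exact ⟨l'', p, List.concat_eq_append⟩
        have hev'' : Even l''.length := by
          simp only [List.length_append, List.length_singleton, Nat.even_add_one] at hev ⊢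
          tauto
        set U : Rfl O m c b := w O m c b (p :: a :: l'') * prodX O m c b rest with hU
        have hUmem : U ∈ Msub O m c b := by
          refine ih _ _ ?_
          simp only [List.length_cons, List.length_append, List.length_singleton] at h ⊢
          omega
        have hAU : alc O m c b * U ∈ Msub O m c b := by
          rw [alc_eq, Finset.sum_mul]
          refine Submodule.sum_mem _ fun i _ => ?_
          have e2 : yc O m c b (Fin.castLE (by omega) i) (Fin.rev (Fin.castLE (by omega) i)) * U
              = w O m c b ((Fin.castLE (by omega) i) :: (Fin.rev (Fin.castLE (by omega) i))
                  :: p :: a :: l'') * prodX O m c b rest := by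
            simp only [hU, w_cons2]
            ring
          rw [e2]
          refine ih _ _ ?_
          simp only [List.length_cons, List.length_append, List.length_nil] at h ⊢
          omega
        have key : w O m c b (l'' ++ [p]) * prodX O m c b (a :: rest)
            = -((C c : MvPolynomial (Fin (2 * m)) O) • (alc O m c b * U)
                + (C b : MvPolynomial (Fin (2 * m)) O) • U) := by
          calc w O m c b (l'' ++ [p]) * prodX O m c b (a :: rest)
              = (xc O m c b p * xc O m c b a) * (w O m c b l'' * prodX O m c b rest) := by
                rw [w_append l'' [p] hev'', w_single, prodX_cons]; ring
            _ = -((C c : MvPolynomial (Fin (2 * m)) O) • (alc O m c b * U)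
                + (C b : MvPolynomial (Fin (2 * m)) O) • U) := by
                rw [xc_R4 O m c b p a, algS_smul, algS_smul, Psi_C, Psi_C, hU, w_cons2]; ring
        rw [key]
        exact Submodule.neg_mem _ (Submodule.add_mem _
          (Submodule.smul_mem _ _ hAU) (Submodule.smul_mem _ _ hUmem))
    | [] =>
      rw [prodX_nil, mul_one]
      by_cases hnd : l.Nodup
      · have hperm : (Finset.sort l.toFinset (· ≤ ·)).Perm l :=
          (Finset.sort_perm_toList _ _).trans (List.toFinset_toList hnd)
        rw [← w_perm _ _ hperm]
        exact Submodule.subset_span ⟨l.toFinset, rfl⟩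
      · obtain ⟨a, ha⟩ := List.exists_duplicate_iff_not_nodup.mpr hnd
        have ha1 : a ∈ l := ha.mem
        have ha2 : a ∈ l.erase a := by
          have := List.duplicate_iff_two_le_count.mp ha
          have hc1 : 0 < (l.erase a).count a := by
            rw [List.count_erase_self]; omega
          exact List.count_pos_iff.mp hc1
        have hperm : l.Perm (a :: a :: (l.erase a).erase a) :=
          (List.perm_cons_erase ha1).trans ((List.perm_cons_erase ha2).cons a)
        rw [w_perm _ _ hperm, w_cons2, yc_diag, ← algS_smul]
        have hmem : w O m c b ((l.erase a).erase a) * prodX O m c b [] ∈ Msub O m c b := by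
          refine ih _ _ ?_
          have e1 : l.length = (a :: a :: (l.erase a).erase a).length := hperm.length_eq
          simp only [List.length_cons, List.length_nil] at h e1 ⊢
          omega
        rw [prodX_nil, mul_one] at hmem
        exact Submodule.smul_mem _ _ hmem

lemma span_Bfam_top : Msub O m c b = ⊤ := by
  rw [eq_top_iff]
  set G : Set (Rfl O m c b) := Set.range fun s : (Fin (2 * m) × Fin (2 * m)) ⊕ Fin (2 * m) =>
    Ideal.Quotient.mk (Ifl O m c b) (X s) with hG
  have hadjO : Algebra.adjoin O G = ⊤ := by
    have himg : G = (Ideal.Quotient.mkₐ O (Ifl O m c b)) ''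
        (Set.range (X : _ → P O m)) := by
      rw [hG, ← Set.range_comp]; rfl
    rw [himg, ← AlgHom.map_adjoin, MvPolynomial.adjoin_range_X, Algebra.map_top,
      (AlgHom.range_eq_top _).mpr (Ideal.Quotient.mkₐ_surjective O _)]
  have hadjS : Algebra.adjoin (MvPolynomial (Fin (2 * m)) O) G = ⊤ := by
    rw [eq_top_iff]
    intro z _
    have hz : z ∈ Algebra.adjoin O G := by rw [hadjO]; trivial
    have hle : Algebra.adjoin O G ≤
        (Algebra.adjoin (MvPolynomial (Fin (2 * m)) O) G).restrictScalars O :=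
      Algebra.adjoin_le (Algebra.subset_adjoin (R := MvPolynomial (Fin (2 * m)) O))
    exact hle hz
  have hword : ∀ y ∈ Submonoid.closure G,
      ∃ l xs, Even l.length ∧ y = w O m c b l * prodX O m c b xs := by
    intro y hy
    induction hy using Submonoid.closure_induction with
    | mem z hz =>
      obtain ⟨s, rfl⟩ := hz
      match s with
      | Sum.inl pr =>
        refine ⟨[pr.1, pr.2], [], by simp, ?_⟩
        rw [prodX_nil, mul_one, w_cons2, w_nil, mul_one, yc]
      | Sum.inr i =>
        refine ⟨[], [i], by simp, ?_⟩
        rw [w_nil, one_mul, prodX_cons, prodX_nil, mul_one, xc]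
    | one => exact ⟨[], [], by simp, by rw [w_nil, prodX_nil, mul_one]⟩
    | mul z₁ z₂ h₁ h₂ ih₁ ih₂ =>
      obtain ⟨l₁, xs₁, he₁, rfl⟩ := ih₁
      obtain ⟨l₂, xs₂, he₂, rfl⟩ := ih₂
      refine ⟨l₁ ++ l₂, xs₁ ++ xs₂, by simp [Nat.even_add, he₁, he₂], ?_⟩
      rw [w_append _ _ he₁, prodX_append]; ring
  intro z _
  have hz2 : z ∈ Subalgebra.toSubmodule
      (Algebra.adjoin (MvPolynomial (Fin (2 * m)) O) G) := by rw [hadjS]; trivial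
  rw [Algebra.adjoin_eq_span] at hz2
  refine Submodule.span_le.mpr ?_ hz2
  rintro y hy
  obtain ⟨l, xs, _, rfl⟩ := hword y hy
  exact master O m c b _ l xs le_rfl

end Part4
end Stmt12Proof
namespace Stmt12Proof
open Stmt12

section Part5a
variable {O : Type*} [CommRing O] {σ : Type*} [DecidableEq σ]

/-- The exponent vector of a squarefree monomial. -/
noncomputable def indE (E : Finset (σ)) : σ →₀ ℕ :=
  ∑ i ∈ E, Finsupp.single i 1

lemma indE_apply (E : Finset (σ)) (i : σ) :
    indE E i = if i ∈ E then 1 else 0 := by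
  rw [indE, Finset.sum_apply']
  simp only [Finsupp.single_apply]
  rw [Finset.sum_ite_eq' E i (fun _ => 1)]

lemma expand_two_monomial (d : σ →₀ ℕ) (r : O) :
    expand 2 (monomial d r) = monomial (2 • d) r := by
  rw [expand_monomial, monomial_eq]

lemma expand_two_eq_sum (g : MvPolynomial (σ) O) :
    expand 2 g = ∑ d ∈ g.support, monomial (2 • d) (coeff d g) := by
  conv_lhs => rw [g.as_sum]
  rw [map_sum]
  exact Finset.sum_congr rfl fun d _ => expand_two_monomial d _

lemma coeff_expand_two_smul (g : MvPolynomial (σ) O) (u : σ →₀ ℕ) :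
    coeff (2 • u) (expand 2 g) = coeff u g := by
  rw [expand_two_eq_sum, coeff_sum]
  simp only [coeff_monomial]
  have h2 : ∀ d : σ →₀ ℕ, 2 • d = 2 • u ↔ d = u := by
    intro d
    constructor
    · intro h
      ext i
      have := congrArg (fun f : σ →₀ ℕ => f i) h
      simp only [Finsupp.smul_apply, smul_eq_mul] at this
      omega
    · rintro rfl; rfl
  simp only [h2]
  rw [Finset.sum_ite_eq' g.support u (fun d => coeff d g)]
  by_cases hu : u ∈ g.support
  · rw [if_pos hu]
  · rw [if_neg hu]
    exact (MvPolynomial.notMem_support_iff.mp hu).symm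

lemma coeff_expand_two_odd (g : MvPolynomial (σ) O) (e : σ →₀ ℕ)
    (h : ¬ ∀ i, 2 ∣ e i) : coeff e (expand 2 g) = 0 := by
  rw [expand_two_eq_sum, coeff_sum]
  refine Finset.sum_eq_zero fun d _ => ?_
  rw [coeff_monomial, if_neg]
  intro hde
  refine h fun i => ?_
  have := congrArg (fun f : σ →₀ ℕ => f i) hde
  simp only [Finsupp.smul_apply, smul_eq_mul] at this
  exact ⟨d i, this.symm⟩

/-- Squarefree monomials are independent over the subring of "expanded" polynomials. -/
lemma parity_indep (T : Finset (Finset (σ)))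
    (g : Finset (σ) → MvPolynomial (σ) O)
    (h : ∑ E ∈ T, expand 2 (g E) * monomial (indE E) (1 : O) = 0) :
    ∀ E ∈ T, g E = 0 := by
  intro E₀ hE₀
  apply MvPolynomial.ext
  intro u₀
  rw [coeff_zero]
  have hc := congrArg (coeff (2 • u₀ + indE E₀)) h
  rw [coeff_sum, coeff_zero, Finset.sum_eq_single E₀] at hc
  · rwa [coeff_mul_monomial', if_pos le_add_self, add_tsub_cancel_right,
      coeff_expand_two_smul, mul_one] at hc
  · intro E _ hne
    rw [coeff_mul_monomial']
    split_ifs with hle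
    · rw [mul_one]
      apply coeff_expand_two_odd
      have hEx : ∃ i, ¬ (i ∈ E ↔ i ∈ E₀) := by
        by_contra hall
        push_neg at hall
        exact hne (Finset.ext_iff.mpr fun i => hall i)
      obtain ⟨i, hi⟩ := hEx
      intro hall
      have hval := hall i
      have hlei : indE E i ≤ (2 • u₀ + indE E₀) i := by
        exact (Finsupp.le_def.mp hle) i
      rw [Finsupp.tsub_apply, Finsupp.add_apply, Finsupp.smul_apply, smul_eq_mul,
        indE_apply, indE_apply] at hval
      rw [Finsupp.add_apply, Finsupp.smul_apply, smul_eq_mul, indE_apply, indE_apply] at hlei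
      by_cases h1 : i ∈ E <;> by_cases h2 : i ∈ E₀ <;>
        simp only [h1, h2, if_true, if_false, iff_true, iff_false, not_true, not_false_iff] at hi hval hlei <;>
        omega
    · rfl
  · intro habs
    exact absurd hE₀ habs

end Part5a
end Stmt12Proof
namespace Stmt12Proof
open Stmt12

section Part5b
variable (O : Type*) [CommRing O] (m : ℕ) (c b : O)

attribute [local instance] algS towerOSR

abbrev towerOQRp : IsScalarTower O (MvPolynomial (Fin (2 * m) × Fin 1) O) (Rp O m c b) :=
  IsScalarTower.of_algebraMap_eq' rfl

attribute [local instance] towerOQRp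

/-- The variable embedding. -/
def emb (i : Fin (2 * m)) : Fin (2 * m) × Fin 1 := (i, 0)

lemma emb_inj : Function.Injective (emb m) := fun i j h => (Prod.mk.injEq _ _ _ _).mp h |>.1

/-- The inclusion `O[v] → R'` as an `O`-algebra map. -/
noncomputable def ofA : MvPolynomial (Fin (2 * m) × Fin 1) O →ₐ[O] Rp O m c b :=
  IsScalarTower.toAlgHom O _ _

lemma ofA_apply (g : MvPolynomial (Fin (2 * m) × Fin 1) O) :
    ofA O m c b g = AdjoinRoot.of (fp O m c b) g := rfl

/-- Key compatibility: `Φ̄ ∘ Ψ` is renaming + "expand by 2" + inclusion. -/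
lemma Phib_comp_Psi :
    (Phib O m c b).comp (Psi O m c b)
      = ((ofA O m c b).comp (expand 2)).comp (rename (emb m)) := by
  apply MvPolynomial.algHom_ext
  intro i
  rw [AlgHom.comp_apply, AlgHom.comp_apply, AlgHom.comp_apply, Psi, aeval_X, Phib_yc,
    rename_X, expand_X, ofA_apply, map_pow, pow_two]
  rfl

lemma Phib_Psi_apply (s : MvPolynomial (Fin (2 * m)) O) :
    Phib O m c b (Psi O m c b s)
      = AdjoinRoot.of (fp O m c b) (expand 2 (rename (emb m) s)) :=
  DFunLike.congr_fun (Phib_comp_Psi O m c b) s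

lemma Phib_w_eq : ∀ l : List (Fin (2 * m)),
    Phib O m c b (w O m c b l)
      = (l.map (vv O m c b)).prod * (if Even l.length then 1 else tt O m c b)
  | [] => by simp
  | [a] => by
    rw [w_single, Phib_xc]
    simp [mul_comm]
  | a :: a' :: l => by
    rw [w_cons2, map_mul, Phib_yc, Phib_w_eq l]
    have hpar : Even (a :: a' :: l).length ↔ Even l.length := by
      simp [Nat.even_add_one, parity_simps]
    by_cases hl : Even l.length
    · rw [if_pos hl, if_pos (hpar.mpr hl)]
      simp only [List.map_cons, List.prod_cons]
      ring
    · rw [if_neg hl, if_neg (fun hh => hl (hpar.mp hh))]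
      simp only [List.map_cons, List.prod_cons]
      ring

lemma X_prod_eq_monomial (F : Finset (Fin (2 * m) × Fin 1)) :
    (∏ i ∈ F, (X i : MvPolynomial (Fin (2 * m) × Fin 1) O)) = monomial (indE F) 1 := by
  classical
  induction F using Finset.induction_on with
  | empty => simp [indE]
  | @insert a F ha ih =>
    rw [Finset.prod_insert ha, ih, show (X a : MvPolynomial (Fin (2 * m) × Fin 1) O)
      = monomial (Finsupp.single a 1) 1 from rfl, monomial_mul, one_mul,
      indE, indE, Finset.sum_insert ha]

lemma Phib_Bfam (E : Finset (Fin (2 * m))) :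
    Phib O m c b (Bfam O m c b E)
      = AdjoinRoot.of (fp O m c b) (monomial (indE (E.image (emb m))) 1)
        * (if Even E.card then 1 else tt O m c b) := by
  rw [Bfam, Phib_w_eq, Finset.length_sort]
  congr 1
  have hperm : ((Finset.sort E (· ≤ ·)).map (vv O m c b)).Perm
      (E.toList.map (vv O m c b)) :=
    (Finset.sort_perm_toList _ _).map _
  rw [hperm.prod_eq, Finset.prod_map_toList, ← X_prod_eq_monomial, map_prod,
    Finset.prod_image (fun i _ j _ h => emb_inj m h)]
  rfl

end Part5b
end Stmt12Proof
namespace Stmt12Proof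
open Stmt12

section Part5c
variable (O : Type*) [CommRing O] [Nontrivial O] (m : ℕ) (c b : O)

attribute [local instance] algS towerOSR towerOQRp

/-- `R'` as an `S`-algebra via `Φ̄ ∘ Ψ`. -/
noncomputable abbrev algSRp : Algebra (MvPolynomial (Fin (2 * m)) O) (Rp O m c b) :=
  ((Phib O m c b).toRingHom.comp (Psi O m c b).toRingHom).toAlgebra

attribute [local instance] algSRp

set_option synthInstance.maxHeartbeats 200000

lemma algSRp_smul (s : MvPolynomial (Fin (2 * m)) O) (z : Rp O m c b) :
    s • z = AdjoinRoot.of (fp O m c b) (expand 2 (rename (emb m) s)) * z := by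
  rw [Algebra.smul_def, RingHom.algebraMap_toAlgebra]
  show Phib O m c b (Psi O m c b s) * z = _
  rw [Phib_Psi_apply]

/-- `Φ̄` as an `S`-linear map. -/
noncomputable def PhibL : Rfl O m c b →ₗ[MvPolynomial (Fin (2 * m)) O] Rp O m c b where
  toFun := Phib O m c b
  map_add' := fun z₁ z₂ => map_add _ z₁ z₂
  map_smul' := fun s z => by
    simp only [RingHom.id_apply]
    rw [algS_smul, map_mul, Algebra.smul_def, RingHom.algebraMap_toAlgebra]
    rfl

lemma one_t_indep (A B : MvPolynomial (Fin (2 * m) × Fin 1) O)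
    (h : AdjoinRoot.of (fp O m c b) A + AdjoinRoot.of (fp O m c b) B * tt O m c b = 0) :
    A = 0 ∧ B = 0 := by
  have hdim : (AdjoinRoot.powerBasis' (fp_monic O m c b)).dim = 2 := by
    rw [AdjoinRoot.powerBasis'_dim, fp, Polynomial.natDegree_X_pow_add_C]
  have hli := ((AdjoinRoot.powerBasis' (fp_monic O m c b)).basis.reindex
    (finCongr hdim)).linearIndependent
  have h0 : ((AdjoinRoot.powerBasis' (fp_monic O m c b)).basis.reindex (finCongr hdim)) 0
      = 1 := by
    rw [Module.Basis.reindex_apply, PowerBasis.basis_eq_pow]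
    norm_num
  have h1 : ((AdjoinRoot.powerBasis' (fp_monic O m c b)).basis.reindex (finCongr hdim)) 1
      = tt O m c b := by
    rw [Module.Basis.reindex_apply, PowerBasis.basis_eq_pow]
    have he : (((finCongr hdim).symm 1 : Fin _) : ℕ) = 1 := rfl
    rw [he, pow_one, AdjoinRoot.powerBasis'_gen]
    rfl
  have key := Fintype.linearIndependent_iff.mp hli ![A, B] ?_
  · exact ⟨by simpa using key 0, by simpa using key 1⟩
  · rw [Fin.sum_univ_two, h0, h1]
    simp only [Matrix.cons_val_zero, Matrix.cons_val_one, Matrix.head_cons]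
    rw [Algebra.smul_def, Algebra.smul_def, AdjoinRoot.algebraMap_eq, mul_one]
    exact h

lemma FE_li : LinearIndependent (MvPolynomial (Fin (2 * m)) O)
    (fun E : Finset (Fin (2 * m)) => Phib O m c b (Bfam O m c b E)) := by
  classical
  rw [Fintype.linearIndependent_iff]
  intro g hg
  have hsummand : ∀ E : Finset (Fin (2 * m)),
      g E • Phib O m c b (Bfam O m c b E)
        = AdjoinRoot.of (fp O m c b)
            (expand 2 (rename (emb m) (g E)) * monomial (indE (E.image (emb m))) 1)
            * (if Even E.card then 1 else tt O m c b) := by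
    intro E
    rw [Phib_Bfam, algSRp_smul, map_mul, mul_assoc]
  simp only [hsummand] at hg
  rw [← Finset.sum_filter_add_sum_filter_not Finset.univ
    (fun E : Finset (Fin (2 * m)) => Even E.card)] at hg
  have he1 : ∀ T : Finset (Finset (Fin (2 * m))), (∀ E ∈ T, Even E.card) →
      ∑ E ∈ T, AdjoinRoot.of (fp O m c b)
          (expand 2 (rename (emb m) (g E)) * monomial (indE (E.image (emb m))) 1)
          * (if Even E.card then 1 else tt O m c b)
        = AdjoinRoot.of (fp O m c b) (∑ E ∈ T,
            expand 2 (rename (emb m) (g E)) * monomial (indE (E.image (emb m))) 1) := by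
    intro T hT
    rw [map_sum]
    exact Finset.sum_congr rfl fun E hE => by rw [if_pos (hT E hE), mul_one]
  have he2 : ∀ T : Finset (Finset (Fin (2 * m))), (∀ E ∈ T, ¬ Even E.card) →
      ∑ E ∈ T, AdjoinRoot.of (fp O m c b)
          (expand 2 (rename (emb m) (g E)) * monomial (indE (E.image (emb m))) 1)
          * (if Even E.card then 1 else tt O m c b)
        = AdjoinRoot.of (fp O m c b) (∑ E ∈ T,
            expand 2 (rename (emb m) (g E)) * monomial (indE (E.image (emb m))) 1)
            * tt O m c b := by
    intro T hT
    rw [map_sum, Finset.sum_mul]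
    exact Finset.sum_congr rfl fun E hE => by rw [if_neg (hT E hE)]
  rw [he1 _ (fun E hE => (Finset.mem_filter.mp hE).2),
    he2 _ (fun E hE => (Finset.mem_filter.mp hE).2)] at hg
  obtain ⟨hA, hB⟩ := one_t_indep O m c b _ _ hg
  -- transfer along the image reindexing
  have himg : ∀ (T : Finset (Finset (Fin (2 * m)))),
      (∑ E ∈ T, expand 2 (rename (emb m) (g E)) * monomial (indE (E.image (emb m))) 1) = 0 →
      ∀ E ∈ T, g E = 0 := by
    intro T hsum E hE
    have hinj : Function.Injective (fun E : Finset (Fin (2 * m)) => E.image (emb m)) :=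
      fun E₁ E₂ h => by
        have := congrArg (fun F : Finset (Fin (2 * m) × Fin 1) => F.image Prod.fst) h
        simpa [Finset.image_image, Function.comp_def, emb] using this
    set g' : Finset (Fin (2 * m) × Fin 1) → MvPolynomial (Fin (2 * m) × Fin 1) O :=
      fun F => rename (emb m) (g (F.image Prod.fst)) with hg'
    have hg'E : ∀ E' ∈ T, g' (E'.image (emb m)) = rename (emb m) (g E') := by
      intro E' _
      have hEE : (E'.image (emb m)).image Prod.fst = E' := by
        rw [Finset.image_image]
        have h1 : (Prod.fst ∘ emb m) = id := rfl
        rw [h1, Finset.image_id]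
      simp only [hg', hEE]
    have hsum' : ∑ F ∈ T.image (fun E => E.image (emb m)),
        expand 2 (g' F) * monomial (indE F) 1 = 0 := by
      rw [Finset.sum_image (fun E₁ h₁ E₂ h₂ h => hinj h)]
      rw [← hsum]
      exact Finset.sum_congr rfl fun E' hE' => by rw [hg'E E' hE']
    have := parity_indep _ g' hsum' (E.image (emb m))
      (Finset.mem_image_of_mem _ hE)
    rw [hg'E E hE] at this
    exact rename_injective _ (emb_inj m) (by rw [this, map_zero])
  intro E
  by_cases hEc : Even E.card
  · exact himg _ hA E (Finset.mem_filter.mpr ⟨Finset.mem_univ _, hEc⟩)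
  · exact himg _ hB E (Finset.mem_filter.mpr ⟨Finset.mem_univ _, hEc⟩)

lemma Bfam_li : LinearIndependent (MvPolynomial (Fin (2 * m)) O) (Bfam O m c b) :=
  LinearIndependent.of_comp (PhibL O m c b) (FE_li O m c b)

end Part5c
end Stmt12Proof
namespace Stmt12Proof
open Stmt12

section Part6
variable (O : Type*) [CommRing O] [Nontrivial O] (m : ℕ) (c b : O)

attribute [local instance] algS towerOSR

set_option synthInstance.maxHeartbeats 200000

/-- The canonical basis of `R^fl` over `S`. -/
noncomputable def basRfl : Module.Basis (Finset (Fin (2 * m))) (MvPolynomial (Fin (2 * m)) O)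
    (Rfl O m c b) :=
  Module.Basis.mk (Bfam_li O m c b) (span_Bfam_top O m c b).ge

lemma final_inj : Function.Injective (Psi O m c b) := by
  rw [injective_iff_map_eq_zero]
  intro s hs
  have h1 : s • Bfam O m c b ∅ = 0 := by
    rw [Bfam_empty, algS_smul, mul_one]
    exact hs
  have h2 := linearIndependent_iff.mp (Bfam_li O m c b) (Finsupp.single ∅ s)
    (by rw [Finsupp.linearCombination_single]; exact h1)
  exact Finsupp.single_eq_zero.mp h2

lemma final_finite : (Psi O m c b).toRingHom.Finite :=
  Module.Finite.of_basis (basRfl O m c b)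

set_option synthInstance.maxHeartbeats 1000000 in
lemma final_flat : (Psi O m c b).toRingHom.Flat := by
  haveI : Module.Free (MvPolynomial (Fin (2 * m)) O) (Rfl O m c b) :=
    Module.Free.of_basis (basRfl O m c b)
  exact Module.Flat.of_free

end Part6
end Stmt12Proof
/-- **finiteness and flatness over the diagonal polynomial subring.**  Let `O`
be a complete discrete valuation ring whose fraction field has characteristic `0` and whose
residue field has characteristic `2`, let `c ∈ O` be a unit and `b ∈ O` a uniformizer (`m ≥ 1`),
and let `R^fl` be the ring described above.  Let `S := O[y₁₁, …, y_{2m,2m}]` be the polynomial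
ring in the diagonal variables and `ψ : S → R^fl` the natural `O`-algebra homomorphism sending
each `y_{ii}` to its class.  Then `ψ` is injective, `R^fl` is a finitely generated `S`-module
(via `ψ`), and `R^fl` is flat as an `S`-module (via `ψ`). -/
theorem stmt_12 (O : Type*) [CommRing O] [IsDomain O] [IsDiscreteValuationRing O] [CharZero O]
    [IsAdicComplete (IsLocalRing.maximalIdeal O) O]
    [CharP (IsLocalRing.ResidueField O) 2]
    (m : ℕ) (hm : 1 ≤ m) (c : O) (hc : IsUnit c) (b : O) (hb : Irreducible b)
    (ψ : MvPolynomial (Fin (2 * m)) O →ₐ[O] Stmt12.Rfl O m c b)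
    (hψ : ψ = MvPolynomial.aeval (fun i : Fin (2 * m) => Stmt12.yc O m c b i i)) :
    Function.Injective ψ ∧ ψ.toRingHom.Finite ∧ ψ.toRingHom.Flat := by
  subst hψ
  exact ⟨Stmt12Proof.final_inj O m c b, Stmt12Proof.final_finite O m c b,
    Stmt12Proof.final_flat O m c b⟩
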